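/- Let K be a field, n a positive integer, and let A ∈ M_n(K) be a matrix that is not a scalar multiple of the identity. Then the codimension of the centralizer of A in M_n(K) (equivalently, the rank of the linear map ad_A : M ↦ AM - MA) is at least 2n - 2. -/

import Mathlib

open Matrix Module

section Helpers

variable {K : Type*} [Field K] {n : ℕ}

/-- dot product with fixed right factor, linear in the left factor -/
private def dotL (x : Fin n → K) : (Fin n → K) →ₗ[K] K where
  toFun u := u ⬝ᵥ x
  map_add' a b := add_dotProduct a b x
  map_smul' c a := smul_dotProduct c a x

/-- dot product with fixed left factor, linear in the right factor -/
private def dotR (x : Fin n → K) : (Fin n → K) →ₗ[K] K where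
  toFun u := x ⬝ᵥ u
  map_add' a b := dotProduct_add x a b
  map_smul' c a := dotProduct_smul c x a

private def mulVecL (v : Fin n → K) : Matrix (Fin n) (Fin n) K →ₗ[K] (Fin n → K) where
  toFun M := M.mulVec v
  map_add' M N := Matrix.add_mulVec M N v
  map_smul' c M := by
    ext i; simp [Matrix.mulVec, dotProduct, Finset.mul_sum, mul_assoc]

private def vecMulL (w : Fin n → K) : Matrix (Fin n) (Fin n) K →ₗ[K] (Fin n → K) where
  toFun M := Matrix.vecMul w M
  map_add' M N := by
    ext j; simp [Matrix.vecMul, dotProduct, mul_add, Finset.sum_add_distrib]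
  map_smul' c M := by
    ext j; simp [Matrix.vecMul, dotProduct, Finset.mul_sum, mul_left_comm]

private def outer (y φ : Fin n → K) : Matrix (Fin n) (Fin n) K := fun i j => y i * φ j

private lemma outer_mulVec (y φ x : Fin n → K) :
    (outer y φ).mulVec x = (φ ⬝ᵥ x) • y := by
  ext i
  simp [outer, Matrix.mulVec, dotProduct, Finset.mul_sum, mul_assoc, mul_left_comm,
    mul_comm]

private lemma vecMul_outer (y φ x : Fin n → K) :
    Matrix.vecMul x (outer y φ) = (x ⬝ᵥ y) • φ := by
  ext j
  simp [outer, Matrix.vecMul, dotProduct, Finset.sum_mul, mul_assoc]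

/-- surjectivity of simultaneous dot products against an independent pair -/
private lemma dual_pair {x1 x2 : Fin n → K} (h : LinearIndependent K ![x1, x2]) :
    ∀ a b : K, ∃ u : Fin n → K, u ⬝ᵥ x1 = a ∧ u ⬝ᵥ x2 = b := by
  have hpair := LinearIndependent.pair_iff.1 h
  set D : (Fin n → K) →ₗ[K] K × K := (dotL x1).prod (dotL x2) with hD
  have hsurj : Function.Surjective D := by
    rw [← LinearMap.range_eq_top]
    by_contra hne
    obtain ⟨φ, hφ0, hφ⟩ := Submodule.exists_dual_map_eq_bot_of_lt_top
      (lt_top_iff_ne_top.2 hne) inferInstance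
    have hform : ∀ x y : K, φ (x, y) = x * φ (1, 0) + y * φ (0, 1) := by
      intro x y
      have hxy : (x, y) = x • ((1 : K), (0 : K)) + y • ((0 : K), (1 : K)) := by
        simp [Prod.ext_iff]
      rw [hxy, map_add, _root_.map_smul, _root_.map_smul, smul_eq_mul, smul_eq_mul]
    set a := φ (1, 0); set b := φ (0, 1)
    have hzero : ∀ u : Fin n → K, φ (D u) = 0 := by
      intro u
      have hmem : φ (D u) ∈ (LinearMap.range D).map φ :=
        Submodule.mem_map_of_mem (LinearMap.mem_range_self D u)
      rw [hφ] at hmem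
      simpa using hmem
    have hdots : ∀ u : Fin n → K, u ⬝ᵥ (a • x1 + b • x2) = 0 := by
      intro u
      have := hzero u
      rw [hD] at this
      simp only [LinearMap.prod_apply, Function.prod, dotL, LinearMap.coe_mk, AddHom.coe_mk] at this
      rw [hform] at this
      simp only [dotProduct_add, dotProduct_smul, smul_eq_mul]
      linear_combination this
    have hv : a • x1 + b • x2 = 0 := by
      ext i
      simpa using hdots (Pi.single i 1)
    obtain ⟨ha, hb⟩ := hpair a b hv
    apply hφ0
    apply LinearMap.ext
    rintro ⟨x, y⟩
    rw [hform]
    simp [ha, hb]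
  intro a b
  obtain ⟨u, hu⟩ := hsurj (a, b)
  rw [hD] at hu
  simp only [LinearMap.prod_apply, Function.prod, dotL, LinearMap.coe_mk, AddHom.coe_mk,
    Prod.mk.injEq] at hu
  exact ⟨u, hu.1, hu.2⟩

/-- a non-scalar matrix moves some vector off its own line -/
private lemma exists_indep (hn : 0 < n) {A : Matrix (Fin n) (Fin n) K}
    (hA : ∀ c : K, A ≠ c • (1 : Matrix (Fin n) (Fin n) K)) :
    ∃ v : Fin n → K, LinearIndependent K ![v, A.mulVec v] := by
  by_contra hcon
  push_neg at hcon
  have key : ∀ v : Fin n → K, v ≠ 0 → ∃ c : K, A.mulVec v = c • v := by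
    intro v hv
    have h := hcon v
    rw [LinearIndependent.pair_iff' hv] at h
    push_neg at h
    obtain ⟨c, hc⟩ := h
    exact ⟨c, hc.symm⟩
  have hsingle : ∀ j : Fin n, (Pi.single j (1:K) : Fin n → K) ≠ 0 := by
    intro j hj
    have := congrFun hj j
    simp at this
  have hmv : ∀ k : Fin n, A.mulVec (Pi.single k (1:K)) = fun i => A i k := by
    intro k; ext i; rw [Matrix.mulVec_single]; simp
  have hcol : ∀ j : Fin n, ∃ c : K, ∀ i, A i j = c * (Pi.single j (1:K) : Fin n → K) i := by
    intro j
    obtain ⟨c, hc⟩ := key (Pi.single j 1) (hsingle j)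
    rw [hmv j] at hc
    refine ⟨c, fun i => ?_⟩
    have := congrFun hc i
    simpa using this
  set i0 : Fin n := ⟨0, hn⟩
  obtain ⟨c0, hc0⟩ := hcol i0
  apply hA c0
  ext i j
  obtain ⟨cj, hcj⟩ := hcol j
  have hcij : cj = c0 := by
    by_cases hji : j = i0
    · subst hji
      have h1 := hcj i0
      have h2 := hc0 i0
      simp at h1 h2
      rw [h1] at h2; exact h2
    · -- use the vector single i0 + single j
      obtain ⟨c, hc⟩ := key (Pi.single i0 1 + Pi.single j 1) (by
        intro hz
        have h0 := congrFun hz i0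
        simp [Pi.single_apply, Ne.symm hji] at h0)
      rw [Matrix.mulVec_add, hmv i0, hmv j] at hc
      have hati0 := congrFun hc i0
      have hatj := congrFun hc j
      have e1 := hc0 i0
      have e2 := hcj i0
      have e3 := hc0 j
      have e4 := hcj j
      simp [Pi.single_apply, hji, Ne.symm hji] at e1 e2 e3 e4 hati0 hatj
      rw [e1, e2] at hati0
      rw [e3, e4] at hatj
      simp at hati0 hatj
      rw [hati0, ← hatj]
  rw [hcj i, hcij]
  by_cases hij : i = j <;>
    simp [Matrix.smul_apply, Matrix.one_apply, Pi.single_apply, hij]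

end Helpers

theorem centralizer_codim_ge (K : Type*) [Field K] (n : ℕ) (hn : 0 < n)
    (A : Matrix (Fin n) (Fin n) K) (hA : ∀ c : K, A ≠ c • (1 : Matrix (Fin n) (Fin n) K)) :
    2 * n - 2 ≤ n ^ 2 - Module.finrank K
      (LinearMap.ker (LinearMap.mulLeft K A - LinearMap.mulRight K A)) := by
  classical
  -- the vector v with v, Av independent, and the covector w with w, wA independent
  obtain ⟨v, hv⟩ := exists_indep hn hA
  have hAT : ∀ c : K, Aᵀ ≠ c • (1 : Matrix (Fin n) (Fin n) K) := by
    intro c hc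
    apply hA c
    calc A = Aᵀᵀ := (Matrix.transpose_transpose A).symm
    _ = (c • 1)ᵀ := by rw [hc]
    _ = c • 1 := by simp
  obtain ⟨w, hw'⟩ := exists_indep hn hAT
  have hwAeq : Aᵀ.mulVec w = Matrix.vecMul w A := by
    rw [Matrix.mulVec_transpose]
  have hw : LinearIndependent K ![w, Matrix.vecMul w A] := by rwa [hwAeq] at hw'
  set Av : Fin n → K := A.mulVec v with hAvdef
  set wA : Fin n → K := Matrix.vecMul w A with hwAdef
  -- n ≥ 2
  have h2n : 2 ≤ n := by
    have := hv.fintype_card_le_finrank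
    simpa using this
  -- dual pairs
  obtain ⟨φ1, hφ1v, hφ1Av⟩ := dual_pair hv 1 0
  obtain ⟨φ2, hφ2v, hφ2Av⟩ := dual_pair hv 0 1
  obtain ⟨ψ1, hψ1w, hψ1wA⟩ := dual_pair hw 1 0
  obtain ⟨ψ2, hψ2w, hψ2wA⟩ := dual_pair hw 0 1
  set C : Submodule K (Matrix (Fin n) (Fin n) K) :=
    LinearMap.ker (LinearMap.mulLeft K A - LinearMap.mulRight K A) with hCdef
  have hmemC : ∀ M : (Matrix (Fin n) (Fin n) K), M ∈ C ↔ A * M = M * A := by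
    intro M
    rw [hCdef, LinearMap.mem_ker, LinearMap.sub_apply, LinearMap.mulLeft_apply,
      LinearMap.mulRight_apply, sub_eq_zero]
  -- the subspace S₁ of matrices killed by w and wA on the left
  set h1 : (Matrix (Fin n) (Fin n) K) →ₗ[K] (Fin n → K) × (Fin n → K) := (vecMulL w).prod (vecMulL wA) with hh1
  set S₁ : Submodule K (Matrix (Fin n) (Fin n) K) := LinearMap.ker h1 with hS₁def
  have hmemS₁ : ∀ M : (Matrix (Fin n) (Fin n) K), M ∈ S₁ ↔ Matrix.vecMul w M = 0 ∧ Matrix.vecMul wA M = 0 := by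
    intro M
    rw [hS₁def, LinearMap.mem_ker, hh1]
    constructor
    · intro hp
      exact ⟨congrArg Prod.fst hp, congrArg Prod.snd hp⟩
    · intro ⟨hp1, hp2⟩
      exact Prod.ext hp1 hp2
  have hh1surj : Function.Surjective h1 := by
    intro ⟨r1, r2⟩
    refine ⟨outer ψ1 r1 + outer ψ2 r2, ?_⟩
    have hc1 : Matrix.vecMul w (outer ψ1 r1 + outer ψ2 r2) = r1 := by
      have := (vecMulL (n := n) w).map_add (outer ψ1 r1) (outer ψ2 r2)
      simp only [vecMulL, LinearMap.coe_mk, AddHom.coe_mk] at this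
      rw [this, vecMul_outer, vecMul_outer, dotProduct_comm w ψ1,
        dotProduct_comm w ψ2, hψ1w, hψ2w]
      simp
    have hc2 : Matrix.vecMul wA (outer ψ1 r1 + outer ψ2 r2) = r2 := by
      have := (vecMulL (n := n) wA).map_add (outer ψ1 r1) (outer ψ2 r2)
      simp only [vecMulL, LinearMap.coe_mk, AddHom.coe_mk] at this
      rw [this, vecMul_outer, vecMul_outer, dotProduct_comm wA ψ1,
        dotProduct_comm wA ψ2, hψ1wA, hψ2wA]
      simp
    rw [hh1]
    exact Prod.ext hc1 hc2
  have hfrMat : finrank K (Matrix (Fin n) (Fin n) K) = n * n := by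
    rw [Module.finrank_matrix]
    simp
  have hfrV : finrank K (Fin n → K) = n := by simp [Module.finrank_pi]
  have hfrS₁ : finrank K S₁ + (n + n) = n * n := by
    have := LinearMap.finrank_range_add_finrank_ker h1
    rw [LinearMap.range_eq_top.2 hh1surj, finrank_top, Module.finrank_prod, hfrV, hfrMat,
      ← hS₁def] at this
    omega
  -- the subspace Y of vectors killed by w and wA
  set gY : (Fin n → K) →ₗ[K] K × K := (dotR w).prod (dotR wA) with hgY
  set Y : Submodule K (Fin n → K) := LinearMap.ker gY with hYdef
  have hmemY : ∀ x : (Fin n → K), x ∈ Y ↔ w ⬝ᵥ x = 0 ∧ wA ⬝ᵥ x = 0 := by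
    intro x
    rw [hYdef, LinearMap.mem_ker, hgY]
    constructor
    · intro hp
      exact ⟨congrArg Prod.fst hp, congrArg Prod.snd hp⟩
    · intro ⟨hp1, hp2⟩
      exact Prod.ext hp1 hp2
  have hgYsurj : Function.Surjective gY := by
    intro ⟨a, b⟩
    refine ⟨a • ψ1 + b • ψ2, ?_⟩
    rw [hgY]
    have e1 : w ⬝ᵥ (a • ψ1 + b • ψ2) = a := by
      simp [dotProduct_add, dotProduct_smul, dotProduct_comm w ψ1,
        dotProduct_comm w ψ2, hψ1w, hψ2w]
    have e2 : wA ⬝ᵥ (a • ψ1 + b • ψ2) = b := by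
      simp [dotProduct_add, dotProduct_smul, dotProduct_comm wA ψ1,
        dotProduct_comm wA ψ2, hψ1wA, hψ2wA]
    exact Prod.ext (by simpa [dotR] using e1) (by simpa [dotR] using e2)
  have hfrY : finrank K Y + 2 = n := by
    have := LinearMap.finrank_range_add_finrank_ker gY
    rw [LinearMap.range_eq_top.2 hgYsurj, finrank_top, Module.finrank_prod, hfrV,
      ← hYdef] at this
    simp only [Module.finrank_self] at this
    omega
  -- evaluation of S₁ at v and Av, valued in Y × Y
  have hevY : ∀ (z : (Fin n → K)), ∀ M ∈ S₁, M.mulVec z ∈ Y := by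
    intro z M hM
    rw [hmemS₁] at hM
    rw [hmemY]
    constructor
    · rw [Matrix.dotProduct_mulVec, hM.1, zero_dotProduct]
    · rw [Matrix.dotProduct_mulVec, hM.2, zero_dotProduct]
  set ev : S₁ →ₗ[K] Y × Y :=
    (LinearMap.codRestrict Y ((mulVecL v).comp S₁.subtype)
        (fun M => hevY v M.1 M.2)).prod
      (LinearMap.codRestrict Y ((mulVecL Av).comp S₁.subtype)
        (fun M => hevY Av M.1 M.2)) with hev
  have hevsurj : Function.Surjective ev := by
    rintro ⟨⟨y1, hy1⟩, ⟨y2, hy2⟩⟩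
    rw [hmemY] at hy1 hy2
    have hMS : outer y1 φ1 + outer y2 φ2 ∈ S₁ := by
      rw [hmemS₁]
      constructor
      · have := (vecMulL (n := n) w).map_add (outer y1 φ1) (outer y2 φ2)
        simp only [vecMulL, LinearMap.coe_mk, AddHom.coe_mk] at this
        rw [this, vecMul_outer, vecMul_outer, hy1.1, hy2.1]
        simp
      · have := (vecMulL (n := n) wA).map_add (outer y1 φ1) (outer y2 φ2)
        simp only [vecMulL, LinearMap.coe_mk, AddHom.coe_mk] at this
        rw [this, vecMul_outer, vecMul_outer, hy1.2, hy2.2]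
        simp
    refine ⟨⟨outer y1 φ1 + outer y2 φ2, hMS⟩, ?_⟩
    have hval1 : (outer y1 φ1 + outer y2 φ2).mulVec v = y1 := by
      rw [Matrix.add_mulVec, outer_mulVec, outer_mulVec, hφ1v, hφ2v]
      simp
    have hval2 : (outer y1 φ1 + outer y2 φ2).mulVec Av = y2 := by
      rw [Matrix.add_mulVec, outer_mulVec, outer_mulVec, hφ1Av, hφ2Av]
      simp
    rw [hev]
    refine Prod.ext (Subtype.ext ?_) (Subtype.ext ?_)
    · simpa [mulVecL] using hval1
    · simpa [mulVecL] using hval2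
  set T : Submodule K S₁ := LinearMap.ker ev with hTdef
  have hfrT : finrank K T + (finrank K Y + finrank K Y) = finrank K S₁ := by
    have := LinearMap.finrank_range_add_finrank_ker ev
    rw [LinearMap.range_eq_top.2 hevsurj, finrank_top, Module.finrank_prod, ← hTdef] at this
    omega
  -- the restriction of (Mv, wM) to the centralizer C
  set E : (Matrix (Fin n) (Fin n) K) →ₗ[K] (Fin n → K) × (Fin n → K) := (mulVecL v).prod (vecMulL w) with hE
  set Eh : C →ₗ[K] (Fin n → K) × (Fin n → K) := E.comp C.subtype with hEhat
  have hfrC : finrank K C = finrank K (LinearMap.ker Eh) + finrank K (LinearMap.range Eh) := by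
    have := LinearMap.finrank_range_add_finrank_ker Eh
    omega
  -- the kernel of Eh injects into T
  have hkerT : finrank K (LinearMap.ker Eh) ≤ finrank K T := by
    set j0 : LinearMap.ker Eh →ₗ[K] (Matrix (Fin n) (Fin n) K) := C.subtype.comp (LinearMap.ker Eh).subtype with hj0
    have hj0inj : Function.Injective j0 := by
      rw [hj0]
      exact C.injective_subtype.comp (LinearMap.ker Eh).injective_subtype
    have hkprops : ∀ x : LinearMap.ker Eh, A * (j0 x : (Matrix (Fin n) (Fin n) K)) = (j0 x : (Matrix (Fin n) (Fin n) K)) * A ∧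
        (j0 x : (Matrix (Fin n) (Fin n) K)).mulVec v = 0 ∧ Matrix.vecMul w (j0 x : (Matrix (Fin n) (Fin n) K)) = 0 := by
      intro x
      have hxk : Eh (x : C) = 0 := LinearMap.mem_ker.1 x.2
      have h1' : (j0 x : Matrix (Fin n) (Fin n) K).mulVec v = 0 := congrArg Prod.fst hxk
      have h2' : Matrix.vecMul w (j0 x : Matrix (Fin n) (Fin n) K) = 0 := congrArg Prod.snd hxk
      have hcomm : A * (j0 x : Matrix (Fin n) (Fin n) K) = (j0 x : Matrix (Fin n) (Fin n) K) * A :=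
        (hmemC _).1 (x : C).2
      exact ⟨hcomm, h1', h2'⟩
    have hj0S₁ : ∀ x : LinearMap.ker Eh, j0 x ∈ S₁ := by
      intro x
      obtain ⟨hcomm, hkv, hkw⟩ := hkprops x
      rw [hmemS₁]
      refine ⟨hkw, ?_⟩
      show Matrix.vecMul wA (j0 x) = 0
      rw [hwAdef, Matrix.vecMul_vecMul, hcomm, ← Matrix.vecMul_vecMul, hkw,
        Matrix.zero_vecMul]
    set j1 : LinearMap.ker Eh →ₗ[K] S₁ := LinearMap.codRestrict S₁ j0 hj0S₁ with hj1
    have hj1T : ∀ x : LinearMap.ker Eh, j1 x ∈ T := by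
      intro x
      obtain ⟨hcomm, hkv, hkw⟩ := hkprops x
      have hAv0 : (j0 x).mulVec Av = 0 := by
        rw [hAvdef, Matrix.mulVec_mulVec, ← hcomm, ← Matrix.mulVec_mulVec, hkv,
          Matrix.mulVec_zero]
      rw [LinearMap.mem_ker]
      refine Prod.ext (Subtype.ext ?_) (Subtype.ext ?_)
      · exact hkv
      · exact hAv0
    set j2 : LinearMap.ker Eh →ₗ[K] T := LinearMap.codRestrict T j1 hj1T with hj2
    have hj2inj : Function.Injective j2 := by
      intro x y hxy
      have h1' := congrArg Subtype.val hxy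
      have h2' := congrArg Subtype.val h1'
      exact hj0inj h2'
    exact LinearMap.finrank_le_finrank_of_injective hj2inj
  -- the range of Eh is contained in Z
  set Ψ : (Fin n → K) × (Fin n → K) →ₗ[K] K × K :=
    ((dotR w).comp (LinearMap.fst K (Fin n → K) (Fin n → K)) - (dotL v).comp (LinearMap.snd K (Fin n → K) (Fin n → K))).prod
      ((dotR wA).comp (LinearMap.fst K (Fin n → K) (Fin n → K)) - (dotL Av).comp (LinearMap.snd K (Fin n → K) (Fin n → K))) with hΨ
  set Z : Submodule K ((Fin n → K) × (Fin n → K)) := LinearMap.ker Ψ with hZdef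
  have hΨsurj : Function.Surjective Ψ := by
    intro ⟨a, b⟩
    refine ⟨(0, (-a) • φ1 + (-b) • φ2), ?_⟩
    rw [hΨ]
    have e1 : ((-a) • φ1 + (-b) • φ2) ⬝ᵥ v = -a := by
      simp [add_dotProduct, smul_dotProduct, hφ1v, hφ2v]
    have e2 : ((-a) • φ1 + (-b) • φ2) ⬝ᵥ Av = -b := by
      simp [add_dotProduct, smul_dotProduct, hφ1Av, hφ2Av]
    refine Prod.ext ?_ ?_
    · show w ⬝ᵥ (0 : Fin n → K) - (((-a) • φ1 + (-b) • φ2) ⬝ᵥ v) = a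
      rw [dotProduct_zero, e1]; ring
    · show wA ⬝ᵥ (0 : Fin n → K) - (((-a) • φ1 + (-b) • φ2) ⬝ᵥ Av) = b
      rw [dotProduct_zero, e2]; ring
  have hfrZ : finrank K Z + 2 = n + n := by
    have := LinearMap.finrank_range_add_finrank_ker Ψ
    rw [LinearMap.range_eq_top.2 hΨsurj, finrank_top, Module.finrank_prod, Module.finrank_prod,
      hfrV, ← hZdef] at this
    simp only [Module.finrank_self] at this
    omega
  have hrangeZ : LinearMap.range Eh ≤ Z := by
    rintro z ⟨⟨M, hM⟩, rfl⟩
    have hMc : A * M = M * A := (hmemC M).1 hM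
    have c1 : w ⬝ᵥ M.mulVec v - Matrix.vecMul w M ⬝ᵥ v = 0 := by
      rw [Matrix.dotProduct_mulVec, sub_self]
    have c2 : wA ⬝ᵥ M.mulVec v - Matrix.vecMul w M ⬝ᵥ Av = 0 := by
      rw [Matrix.dotProduct_mulVec wA M v, hwAdef, Matrix.vecMul_vecMul, hMc,
        ← Matrix.vecMul_vecMul, hAvdef, Matrix.dotProduct_mulVec (Matrix.vecMul w M) A v,
        sub_self]
    show Ψ (Eh ⟨M, hM⟩) = 0
    exact Prod.ext c1 c2
  have hrangeLe : finrank K (LinearMap.range Eh) ≤ finrank K Z :=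
    Submodule.finrank_mono hrangeZ
  -- put everything together
  have hCbound : finrank K C ≤ finrank K T + finrank K Z := by omega
  have hfinal : finrank K C + (2 * n - 2) ≤ n * n := by
    have hYv : finrank K Y + 2 = n := hfrY
    omega
  have hpow : n ^ 2 = n * n := sq n
  rw [hpow]
  omega
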